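/- Proximal subgradient bound (Proposition 1): Let φ : ℝⁿ → ℝ be convex, ψ : ℝⁿ → ℝ ∪ {∞} proper closed convex, f = φ+ψ. Define x_{k+1} = Prox_{t_k}(x_k − t_k g_k^φ) with g_k^φ ∈ ∂φ(x_k), t_k > 0; equivalently x_{k+1} = x_k − t_k g_k with g_k = g_k^φ + g_k^ψ, g_k^ψ ∈ ∂ψ(x_{k+1}). Let z_k = (∑_{i=0}^{k} t_i g_i)/(∑_{i=0}^{k} t_i). Then for all k ≥ 0, (∑_{i=0}^{k} t_i(φ(x_i)+ψ(x_{i+1})) − ½∑_{i=0}^{k} t_i²‖g_i^φ‖²)/(∑_{i=0}^{k} t_i) ≤ −f*(z_k) + ⟨z_k, x₀⟩ − (∑_{i=0}^{k} t_i)/2·‖z_k‖². -/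

import Mathlib

open scoped RealInnerProductSpace

variable {E : Type*} [NormedAddCommGroup E] [InnerProductSpace ℝ E] [FiniteDimensional ℝ E]

/-- Convex conjugate of an extended-real-valued function. -/
noncomputable def conjFn (f : E → EReal) (z : E) : EReal :=
  ⨆ x : E, (((⟪z, x⟫ : ℝ) : EReal) - f x)

/-- Subdifferential of an extended-real-valued function. -/
def SubgradAt (f : E → EReal) (x : E) : Set E :=
  {g : E | ∀ y : E, f x + (((⟪g, y - x⟫ : ℝ)) : EReal) ≤ f y}

/-- Subdifferential of a real-valued function. -/
def RSubgradAt (f : E → ℝ) (x : E) : Set E :=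
  {g : E | ∀ y : E, f x + ⟪g, y - x⟫ ≤ f y}

/-- Convexity for extended-real-valued functions. -/
def EConvex (f : E → EReal) : Prop :=
  ∀ x y : E, ∀ a b : ℝ, 0 ≤ a → 0 ≤ b → a + b = 1 →
    f (a • x + b • y) ≤ ((a : ℝ) : EReal) * f x + ((b : ℝ) : EReal) * f y

/-- Properness of an extended-real-valued function. -/
def ProperFn (f : E → EReal) : Prop := (∃ x, f x ≠ ⊤) ∧ ∀ x, f x ≠ ⊥

/-- `p` is the proximal point `Prox_t(v)` of `ψ`, i.e. a minimizer of
`y ↦ ψ(y) + ‖y - v‖²/(2t)`. -/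
def IsProxPt (ψ : E → EReal) (t : ℝ) (v p : E) : Prop :=
  ∀ y : E, ψ p + ((‖p - v‖^2 / (2*t) : ℝ) : EReal) ≤ ψ y + ((‖y - v‖^2 / (2*t) : ℝ) : EReal)

lemma ecoe_sum {ι : Type*} (s : Finset ι) (f : ι → ℝ) :
    ((∑ i ∈ s, f i : ℝ) : EReal) = ∑ i ∈ s, ((f i : ℝ) : EReal) := by
  classical
  induction s using Finset.induction_on with
  | empty => simp
  | insert _ _ h ih => simp [Finset.sum_insert h, EReal.coe_add, ih]

lemma half_norm_sum (a : ℕ → E) (n : ℕ) :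
    ∑ i ∈ Finset.range n, (⟪∑ j ∈ Finset.range i, a j, a i⟫ + ‖a i‖^2/2)
      = ‖∑ i ∈ Finset.range n, a i‖^2/2 := by
  induction n with
  | zero => simp
  | succ n ih =>
      rw [Finset.sum_range_succ, Finset.sum_range_succ (f := a), norm_add_sq_real, ih]
      ring

/-- Proposition 1: conjugate-based bound for the proximal subgradient method. -/
theorem prox_subgrad_bound (φ : E → ℝ) (hφc : ConvexOn ℝ Set.univ φ)
    (ψ : E → EReal) (hψc : EConvex ψ) (hψp : ProperFn ψ) (hψlsc : LowerSemicontinuous ψ)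
    (f : E → EReal) (hf : ∀ v, f v = ((φ v : ℝ) : EReal) + ψ v)
    (t : ℕ → ℝ) (ht : ∀ k, 0 < t k)
    (x g gφ gψ : ℕ → E)
    (hgφ : ∀ k, gφ k ∈ RSubgradAt φ (x k))
    (hprox : ∀ k, IsProxPt ψ (t k) (x k - t k • gφ k) (x (k+1)))
    (hgψ : ∀ k, gψ k ∈ SubgradAt ψ (x (k+1)))
    (hg : ∀ k, g k = gφ k + gψ k)
    (hx : ∀ k, x (k+1) = x k - t k • g k)
    (z : ℕ → E)
    (hz : ∀ k, z k = (∑ i ∈ Finset.range (k+1), t i)⁻¹ •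
      ∑ i ∈ Finset.range (k+1), t i • g i) :
    ∀ k : ℕ,
      ((∑ i ∈ Finset.range (k+1), (((t i : ℝ) : EReal) *
            (((φ (x i) : ℝ) : EReal) + ψ (x (i+1))))) -
          ((1/2 * ∑ i ∈ Finset.range (k+1), (t i)^2 * ‖gφ i‖^2 : ℝ) : EReal)) /
          (((∑ i ∈ Finset.range (k+1), t i : ℝ)) : EReal)
        ≤ -(conjFn f (z k)) +
            ((⟪z k, x 0⟫ - (∑ i ∈ Finset.range (k+1), t i) / 2 * ‖z k‖^2 : ℝ) : EReal) := by
  intro k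
  set T : ℝ := ∑ i ∈ Finset.range (k+1), t i with hT
  have hTpos : 0 < T := Finset.sum_pos (fun i _ => ht i) (by simp)
  set S : E := ∑ i ∈ Finset.range (k+1), t i • g i with hS
  -- ψ is real at the iterates
  have hψreal : ∀ i : ℕ, ψ (x (i+1)) = (((ψ (x (i+1))).toReal : ℝ) : EReal) := by
    intro i
    obtain ⟨⟨y0, hy0⟩, hbot⟩ := hψp
    have hne : ψ (x (i+1)) ≠ ⊤ := by
      intro htop
      have h := hgψ i y0
      rw [htop, EReal.top_add_coe, top_le_iff] at h
      exact hy0 h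
    exact (EReal.coe_toReal hne (hbot _)).symm
  set s : ℕ → ℝ := fun i => (ψ (x (i+1))).toReal with hsdef
  -- formula for the iterates
  have hxf : ∀ i, x i = x 0 - ∑ j ∈ Finset.range i, t j • g j := by
    intro i
    induction i with
    | zero => simp
    | succ n ih => rw [hx n, ih, Finset.sum_range_succ]; abel
  -- basic facts about z
  have hzS : ∀ v : E, ⟪z k, v⟫ = T⁻¹ * ⟪S, v⟫ := by
    intro v; rw [hz k, real_inner_smul_left]
  have hzn : ‖z k‖^2 = T⁻¹^2 * ‖S‖^2 := by
    rw [hz k, norm_smul, mul_pow]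
    congr 1
    rw [Real.norm_eq_abs, sq_abs]
  set c : ℝ := ⟪z k, x 0⟫ - T / 2 * ‖z k‖^2 with hc
  set A : ℝ := (∑ i ∈ Finset.range (k+1), t i * (φ (x i) + s i)) -
      1/2 * ∑ i ∈ Finset.range (k+1), (t i)^2 * ‖gφ i‖^2 with hA
  -- the key real inequality, for any point y in the domain of ψ
  have key : ∀ (y : E) (sy : ℝ), ψ y = ((sy : ℝ) : EReal) →
      A ≤ T * (φ y + sy) + ⟪S, x 0 - y⟫ - ‖S‖^2/2 := by
    intro y sy hsy
    have hterm : ∀ i, t i * (φ (x i) + s i) - (t i)^2 * ‖gφ i‖^2/2 ≤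
        t i * (φ y + sy) + ⟪t i • g i, x i - y⟫ - ‖t i • g i‖^2/2 := by
      intro i
      have h1 : φ (x i) + ⟪gφ i, y - x i⟫ ≤ φ y := hgφ i y
      have h2' := hgψ i y
      rw [hψreal i, hsy, ← EReal.coe_add, EReal.coe_le_coe_iff] at h2'
      have hx' : y - x (i+1) = (y - x i) + t i • g i := by rw [hx i]; abel
      rw [hx', inner_add_right, real_inner_smul_right] at h2'
      have hgd : gψ i = g i - gφ i := by rw [hg i]; abel
      rw [hgd, inner_sub_left, inner_sub_left, real_inner_self_eq_norm_sq] at h2'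
      have hq : 0 ≤ t i^2 * (‖gφ i‖^2 - 2*⟪gφ i, g i⟫ + ‖g i‖^2) := by
        have := norm_sub_sq_real (gφ i) (g i)
        nlinarith [sq_nonneg ‖gφ i - g i‖, sq_nonneg (t i), sq_nonneg (t i * ‖gφ i - g i‖)]
      have hn : ‖t i • g i‖^2 = t i^2 * ‖g i‖^2 := by
        rw [norm_smul, mul_pow, Real.norm_eq_abs, sq_abs]
      have hin : ⟪t i • g i, x i - y⟫ = - (t i * ⟪g i, y - x i⟫) := by
        rw [real_inner_smul_left, ← neg_sub y (x i), inner_neg_right]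
        ring
      rw [hn, hin]
      have H1 := mul_le_mul_of_nonneg_left h1 (ht i).le
      have H2 := mul_le_mul_of_nonneg_left h2' (ht i).le
      nlinarith [H1, H2, hq]
    have hRHS : ∑ i ∈ Finset.range (k+1),
        (t i * (φ y + sy) + ⟪t i • g i, x i - y⟫ - ‖t i • g i‖^2/2)
        = T * (φ y + sy) + ⟪S, x 0 - y⟫ - ‖S‖^2/2 := by
      have e : ∀ i ∈ Finset.range (k+1),
          t i * (φ y + sy) + ⟪t i • g i, x i - y⟫ - ‖t i • g i‖^2/2
          = t i * (φ y + sy) + ⟪t i • g i, x 0 - y⟫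
            - (⟪∑ j ∈ Finset.range i, t j • g j, t i • g i⟫ + ‖t i • g i‖^2/2) := by
        intro i _
        rw [hxf i]
        have h3 : x 0 - ∑ j ∈ Finset.range i, t j • g j - y
            = (x 0 - y) - ∑ j ∈ Finset.range i, t j • g j := by abel
        rw [h3, inner_sub_right, real_inner_comm (∑ j ∈ Finset.range i, t j • g j)]
        ring
      rw [Finset.sum_congr rfl e, Finset.sum_sub_distrib, Finset.sum_add_distrib,
        half_norm_sum (fun j => t j • g j) (k+1), ← Finset.sum_mul, ← sum_inner]
    calc A = ∑ i ∈ Finset.range (k+1),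
          (t i * (φ (x i) + s i) - (t i)^2 * ‖gφ i‖^2/2) := by
            rw [Finset.sum_sub_distrib, hA, Finset.mul_sum]
            congr 1
            exact Finset.sum_congr rfl (fun i _ => by ring)
      _ ≤ ∑ i ∈ Finset.range (k+1),
          (t i * (φ y + sy) + ⟪t i • g i, x i - y⟫ - ‖t i • g i‖^2/2) :=
            Finset.sum_le_sum (fun i _ => hterm i)
      _ = _ := hRHS
  -- bound on the conjugate
  have hconj : conjFn f (z k) ≤ ((c - A/T : ℝ) : EReal) := by
    rw [conjFn]
    apply iSup_le
    intro y
    by_cases hy : f y = ⊤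
    · rw [hy]
      simp
    · have hψy : ψ y ≠ ⊤ := by
        intro h; exact hy (by rw [hf y, h, EReal.coe_add_top])
      set sy : ℝ := (ψ y).toReal with hsy'
      have hsy : ψ y = ((sy : ℝ) : EReal) := (EReal.coe_toReal hψy (hψp.2 y)).symm
      rw [hf y, hsy, ← EReal.coe_add, ← EReal.coe_sub, EReal.coe_le_coe_iff]
      have hk := key y sy hsy
      have goal' : A / T ≤ (φ y + sy) - ⟪z k, y⟫ + c := by
        rw [div_le_iff₀ hTpos]
        have e1 : ((φ y + sy) - ⟪z k, y⟫ + c) * T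
            = T * (φ y + sy) + ⟪S, x 0 - y⟫ - ‖S‖^2/2 := by
          rw [hc, hzS, hzS, hzn, inner_sub_right]
          field_simp
          ring
        rw [e1]; exact hk
      linarith
  -- rewrite the LHS as a real coercion
  have hLHS : ((∑ i ∈ Finset.range (k+1), (((t i : ℝ) : EReal) *
            (((φ (x i) : ℝ) : EReal) + ψ (x (i+1))))) -
          ((1/2 * ∑ i ∈ Finset.range (k+1), (t i)^2 * ‖gφ i‖^2 : ℝ) : EReal)) /
          (((∑ i ∈ Finset.range (k+1), t i : ℝ)) : EReal)
        = ((A / T : ℝ) : EReal) := by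
    have h1 : ∀ i ∈ Finset.range (k+1), ((t i : ℝ) : EReal) *
        (((φ (x i) : ℝ) : EReal) + ψ (x (i+1)))
        = ((t i * (φ (x i) + s i) : ℝ) : EReal) := by
      intro i _
      rw [hψreal i, ← EReal.coe_add, ← EReal.coe_mul]
    rw [Finset.sum_congr rfl h1, ← ecoe_sum, ← EReal.coe_sub, ← hT, ← EReal.coe_div, ← hA]
  rw [hLHS]
  have hneg : ((-(c - A/T) : ℝ) : EReal) ≤ -(conjFn f (z k)) := by
    rw [EReal.coe_neg]
    exact EReal.neg_le_neg_iff.mpr hconj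
  calc ((A / T : ℝ) : EReal) = ((-(c - A/T) + c : ℝ) : EReal) := by norm_num
    _ = ((-(c - A/T) : ℝ) : EReal) + ((c : ℝ) : EReal) := EReal.coe_add _ _
    _ ≤ -(conjFn f (z k)) + ((c : ℝ) : EReal) := add_le_add_left hneg _
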